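/- Let p ∈ ℕ, λ > 0, Σ and Σ̂ two p×p real symmetric positive semidefinite matrices, Σ_λ := Σ + λ·I_p and Σ̂_λ := Σ̂ + λ·I_p, and v ∈ ℝ^p. If ‖Σ_λ^{−1/2}(Σ − Σ̂)Σ_λ^{−1/2}‖_{op} ≤ 1/2, then ‖Σ_λ^{1/2} v‖² ≤ 2‖Σ̂_λ^{1/2} v‖²; that is, the regularised out-of-sample prediction loss is at most twice the regularised in-sample prediction loss. -/

import Mathlib

open Matrix

/-- Squared Euclidean norm on `Fin p → ℝ`. -/
noncomputable def sqnorm {p : ℕ} (v : Fin p → ℝ) : ℝ := ∑ i, (v i) ^ 2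

/-- The positive semidefinite square root of a positive semidefinite matrix
(removed from Mathlib; restored with its old definition). -/
noncomputable def Matrix.PosSemidef.sqrt {n : Type*} [Fintype n] [DecidableEq n]
    {A : Matrix n n ℝ} (hA : A.PosSemidef) : Matrix n n ℝ :=
  hA.1.eigenvectorUnitary.1 * diagonal ((√·) ∘ hA.1.eigenvalues) *
  (star hA.1.eigenvectorUnitary : Matrix n n ℝ)

/-- The spectral (ℓ²-operator) norm of a real matrix. -/
noncomputable def opNorm {p : ℕ} (M : Matrix (Fin p) (Fin p) ℝ) : ℝ :=
  ‖Matrix.toEuclideanCLM (𝕜 := ℝ) M‖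

lemma psd_sqrt_transpose {n : Type*} [Fintype n] [DecidableEq n]
    {A : Matrix n n ℝ} (hA : A.PosSemidef) : (hA.sqrt)ᵀ = hA.sqrt := by
  rw [← Matrix.conjTranspose_eq_transpose_of_trivial]
  simp only [Matrix.PosSemidef.sqrt, Matrix.conjTranspose_mul, Matrix.conjTranspose_conjTranspose,
    Matrix.diagonal_conjTranspose, Matrix.star_eq_conjTranspose, Matrix.mul_assoc]
  congr 2

lemma psd_sqrt_mul_self {n : Type*} [Fintype n] [DecidableEq n]
    {A : Matrix n n ℝ} (hA : A.PosSemidef) : hA.sqrt * hA.sqrt = A := by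
  have hU : (star hA.1.eigenvectorUnitary : Matrix n n ℝ) * hA.1.eigenvectorUnitary.1 = 1 :=
    Unitary.coe_star_mul_self _
  have hD : diagonal ((√·) ∘ hA.1.eigenvalues) * diagonal ((√·) ∘ hA.1.eigenvalues)
      = diagonal (RCLike.ofReal ∘ hA.1.eigenvalues) := by
    rw [Matrix.diagonal_mul_diagonal]
    congr 1
    funext i
    simp [Real.mul_self_sqrt (hA.eigenvalues_nonneg i)]
  conv_rhs => rw [hA.1.spectral_theorem, Unitary.conjStarAlgAut_apply]
  simp only [Matrix.PosSemidef.sqrt, Matrix.mul_assoc]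
  rw [← Matrix.mul_assoc (star _ : Matrix n n ℝ), hU, Matrix.one_mul, ← Matrix.mul_assoc (diagonal _), hD]


lemma sqnorm_eq_dot {p : ℕ} (v : Fin p → ℝ) : sqnorm v = v ⬝ᵥ v := by
  simp [sqnorm, dotProduct, sq]

lemma sqnorm_nonneg {p : ℕ} (v : Fin p → ℝ) : 0 ≤ sqnorm v :=
  Finset.sum_nonneg fun i _ => sq_nonneg _

lemma dot_symm_shift {p : ℕ} (A : Matrix (Fin p) (Fin p) ℝ) (h : Aᵀ = A)
    (x y : Fin p → ℝ) : (A *ᵥ x) ⬝ᵥ y = x ⬝ᵥ (A *ᵥ y) := by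
  rw [Matrix.dotProduct_mulVec, ← Matrix.vecMul_transpose, h]

lemma abs_dot_le {p : ℕ} (M : Matrix (Fin p) (Fin p) ℝ) (w : Fin p → ℝ) :
    |w ⬝ᵥ (M *ᵥ w)| ≤ opNorm M * sqnorm w := by
  set x : EuclideanSpace ℝ (Fin p) := (WithLp.equiv 2 _).symm w
  have h1 : w ⬝ᵥ (M *ᵥ w) = inner ℝ x (toEuclideanCLM (𝕜 := ℝ) M x) := by
    rw [Matrix.inner_toEuclideanCLM]
    rfl
  have h2 : ‖x‖ ^ 2 = sqnorm w := by
    rw [EuclideanSpace.norm_eq, Real.sq_sqrt (Finset.sum_nonneg fun i _ => sq_nonneg _)]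
    simp [sqnorm, x, Real.norm_eq_abs, sq_abs]
  calc |w ⬝ᵥ (M *ᵥ w)| = |inner ℝ x (toEuclideanCLM (𝕜 := ℝ) M x)| := by rw [h1]
    _ ≤ ‖x‖ * ‖toEuclideanCLM (𝕜 := ℝ) M x‖ := abs_real_inner_le_norm _ _
    _ ≤ ‖x‖ * (opNorm M * ‖x‖) := by
        gcongr
        exact (toEuclideanCLM (𝕜 := ℝ) M).le_opNorm x
    _ = opNorm M * sqnorm w := by rw [← h2]; ring

/-- if `‖Σ_λ^{−1/2}(Σ − Σ̂)Σ_λ^{−1/2}‖ ≤ 1/2`, then the regularised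
out-of-sample prediction loss is at most twice the regularised in-sample prediction loss. -/
theorem out_sample_le_two_in_sample
    (p : ℕ) (lam : ℝ) (hlam : 0 < lam)
    (Sig Sighat : Matrix (Fin p) (Fin p) ℝ)
    (hSig : Sig.PosSemidef) (hSighat : Sighat.PosSemidef)
    (Sigl Sighatl : Matrix (Fin p) (Fin p) ℝ)
    (hSigl_def : Sigl = Sig + lam • 1) (hSighatl_def : Sighatl = Sighat + lam • 1)
    (hSigl : Sigl.PosSemidef) (hSighatl : Sighatl.PosSemidef)
    (v : Fin p → ℝ)
    (hop : opNorm ((hSigl.sqrt)⁻¹ * (Sig - Sighat) * (hSigl.sqrt)⁻¹) ≤ 1 / 2) :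
    sqnorm (hSigl.sqrt *ᵥ v) ≤ 2 * sqnorm (hSighatl.sqrt *ᵥ v) := by
  set A := hSigl.sqrt with hA
  set B := hSighatl.sqrt with hB
  -- positivity of lam • 1
  have hI : (lam • (1 : Matrix (Fin p) (Fin p) ℝ)).PosDef := by
    constructor
    · simp [Matrix.IsHermitian, Matrix.conjTranspose]
      ext i j
      by_cases h : i = j <;> simp [Matrix.one_apply, h, eq_comm]
    · exact (Matrix.PosDef.one.smul hlam).2
  have hSiglPD : Sigl.PosDef := hSigl_def ▸ Matrix.PosDef.posSemidef_add hSig hI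
  -- A is symmetric and invertible
  have hAsymm : Aᵀ = A := by
    have h := psd_sqrt_transpose hSigl
    exact h
  have hAA : A * A = Sigl := psd_sqrt_mul_self hSigl
  have hAunit : IsUnit A.det := by
    have : A.det * A.det = Sigl.det := by rw [← Matrix.det_mul, hAA]
    have hd : A.det ≠ 0 := by
      intro h
      rw [h, zero_mul] at this
      exact hSiglPD.det_pos.ne' this.symm
    exact hd.isUnit
  have hAinv : A⁻¹ * A = 1 := Matrix.nonsing_inv_mul A hAunit
  have hAinv' : A * A⁻¹ = 1 := Matrix.mul_nonsing_inv A hAunit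
  have hAinvsymm : (A⁻¹)ᵀ = A⁻¹ := by rw [Matrix.transpose_nonsing_inv, hAsymm]
  -- quadratic forms
  have hqA : sqnorm (A *ᵥ v) = v ⬝ᵥ (Sigl *ᵥ v) := by
    rw [sqnorm_eq_dot, dot_symm_shift A hAsymm, Matrix.mulVec_mulVec, hAA]
  have hBsymm : Bᵀ = B := by
    have h := psd_sqrt_transpose hSighatl
    exact h
  have hBB : B * B = Sighatl := psd_sqrt_mul_self hSighatl
  have hqB : sqnorm (B *ᵥ v) = v ⬝ᵥ (Sighatl *ᵥ v) := by
    rw [sqnorm_eq_dot, dot_symm_shift B hBsymm, Matrix.mulVec_mulVec, hBB]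
  -- the difference
  set w := A *ᵥ v with hw
  set M := A⁻¹ * (Sig - Sighat) * A⁻¹ with hM
  have hdiff : v ⬝ᵥ (Sigl *ᵥ v) - v ⬝ᵥ (Sighatl *ᵥ v) = w ⬝ᵥ (M *ᵥ w) := by
    have h1 : M *ᵥ w = (A⁻¹ * (Sig - Sighat)) *ᵥ v := by
      rw [hw, Matrix.mulVec_mulVec, hM, Matrix.mul_assoc (A⁻¹ * (Sig - Sighat)), hAinv, Matrix.mul_one]
    rw [h1, hw, dot_symm_shift A hAsymm, Matrix.mulVec_mulVec, ← Matrix.mul_assoc, hAinv', Matrix.one_mul]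
    rw [← dotProduct_sub, ← Matrix.sub_mulVec]
    congr 2
    rw [hSigl_def, hSighatl_def]
    abel
  have hbound : w ⬝ᵥ (M *ᵥ w) ≤ (1 / 2) * sqnorm w := by
    calc w ⬝ᵥ (M *ᵥ w) ≤ |w ⬝ᵥ (M *ᵥ w)| := le_abs_self _
      _ ≤ opNorm M * sqnorm w := abs_dot_le M w
      _ ≤ (1 / 2) * sqnorm w := by
          apply mul_le_mul_of_nonneg_right hop (sqnorm_nonneg w)
  have hnn := sqnorm_nonneg (B *ᵥ v)
  have : sqnorm w = sqnorm (B *ᵥ v) + w ⬝ᵥ (M *ᵥ w) := by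
    rw [hqA, hqB]; linarith [hdiff]
  linarith [hbound, this]
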